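/- Let M ≥ 1, K ≥ 1 and let N be a positive integer with N > 2πMK. Then for every matrix H ∈ ℂ^{M×K}, (1 − 2πMK/N)^{1/2} · ‖H‖_{𝒜_N} ≤ ‖H‖_𝒜 ≤ ‖H‖_{𝒜_N}. -/

import Mathlib

open Complex Matrix

/-- The steering vector `a_M(f) ∈ ℂ^M`, with entries `exp(2πi·f·m)` for `m = 0, …, M−1`. -/
noncomputable def steer (M : ℕ) (f : ℝ) : Fin M → ℂ :=
  fun m => Complex.exp (2 * Real.pi * Complex.I * (f : ℂ) * (m : ℂ))

/-- The atomic set `𝒜 ⊆ ℂ^{M×K}` of matrices `M^{−1/2}·a_M(f)·u^*` with `f ∈ [0,1)` and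
`‖u‖₂ = 1`. -/
noncomputable def atomicSet (M K : ℕ) : Set (Matrix (Fin M) (Fin K) ℂ) :=
  {X | ∃ f ∈ Set.Ico (0 : ℝ) 1, ∃ u : Fin K → ℂ, (∑ k, ‖u k‖ ^ 2 = 1) ∧
    X = ((Real.sqrt M : ℂ))⁻¹ • Matrix.vecMulVec (steer M f) (star u)}

/-- The grid atomic set `𝒜_N ⊆ ℂ^{M×K}` of matrices `M^{−1/2}·a_M(j/N)·u^*` with
`j ∈ {0, …, N−1}` and `‖u‖₂ = 1`. -/
noncomputable def gridAtomicSet (M K N : ℕ) : Set (Matrix (Fin M) (Fin K) ℂ) :=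
  {X | ∃ j : Fin N, ∃ u : Fin K → ℂ, (∑ k, ‖u k‖ ^ 2 = 1) ∧
    X = ((Real.sqrt M : ℂ))⁻¹ • Matrix.vecMulVec (steer M ((j : ℝ) / N)) (star u)}

/-- The atomic norm `‖·‖_𝒜`: the gauge (Minkowski functional) of the convex hull of `𝒜`. -/
noncomputable def atomicNorm (M K : ℕ) (H : Matrix (Fin M) (Fin K) ℂ) : ℝ :=
  gauge (convexHull ℝ (atomicSet M K)) H

/-- The gridded atomic norm `‖·‖_{𝒜_N}`: the gauge of the convex hull of `𝒜_N`. -/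
noncomputable def gridAtomicNorm (M K N : ℕ) (H : Matrix (Fin M) (Fin K) ℂ) : ℝ :=
  gauge (convexHull ℝ (gridAtomicSet M K N)) H


set_option maxHeartbeats 1600000

section Stmt14Aux

open Pointwise

namespace Stmt14

noncomputable def E (x : ℝ) : ℂ := Complex.exp (2 * Real.pi * Complex.I * x)

lemma E_add (x y : ℝ) : E (x + y) = E x * E y := by
  rw [E, E, E, ← Complex.exp_add]
  congr 1
  push_cast
  ring

lemma E_zero : E 0 = 1 := by simp [E]

lemma E_int (t : ℤ) : E t = 1 := by
  rw [E]
  have h := Complex.exp_int_mul_two_pi_mul_I t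
  rw [← h]
  congr 1
  push_cast
  ring

lemma E_eq_one (r : ℝ) (t : ℤ) (h : r = t) : E r = 1 := by rw [h, E_int]

lemma E_nat_mul (x : ℝ) (n : ℕ) : E (x * n) = E x ^ n := by
  rw [E, E, ← Complex.exp_nat_mul]
  congr 1
  push_cast
  ring

lemma E_conj (x : ℝ) : (starRingEnd ℂ) (E x) = E (-x) := by
  rw [E, E, ← Complex.exp_conj]
  congr 1
  simp only [_root_.map_mul, Complex.conj_I, Complex.conj_ofReal, map_ofNat]
  push_cast
  ring

lemma grid_sum (N : ℕ) (hN : 0 < N) (t : ℤ) :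
    ∑ j ∈ Finset.range N, E ((j : ℝ) / N * t) = if (N : ℤ) ∣ t then (N : ℂ) else 0 := by
  have hN0 : (N : ℝ) ≠ 0 := Nat.cast_ne_zero.mpr hN.ne'
  have key : ∀ j : ℕ, E ((j : ℝ) / N * t) = E ((t : ℝ) / N) ^ j := by
    intro j
    rw [← E_nat_mul]
    congr 1
    field_simp
  by_cases h : (N : ℤ) ∣ t
  · rw [if_pos h]
    obtain ⟨s, rfl⟩ := h
    have h1 : ∀ j ∈ Finset.range N, E ((j : ℝ) / N * (((N : ℤ) * s : ℤ) : ℝ)) = 1 := by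
      intro j _
      apply E_eq_one _ ((j : ℤ) * s)
      push_cast
      field_simp
    rw [Finset.sum_congr rfl h1]
    simp
  · rw [if_neg h]
    have hr : E ((t : ℝ) / N) ≠ 1 := by
      intro hc
      rw [E, Complex.exp_eq_one_iff] at hc
      obtain ⟨n, hn⟩ := hc
      apply h
      have hI : (2 * (Real.pi : ℂ) * Complex.I) ≠ 0 := by
        simp [Real.pi_ne_zero, Complex.I_ne_zero]
      have h2 : (((t : ℝ) / N : ℝ) : ℂ) = (n : ℂ) := by
        apply mul_left_cancel₀ hI
        rw [hn]; ring
      have h3 : (t : ℝ) / N = (n : ℝ) := by exact_mod_cast h2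
      have h4 : (t : ℝ) = (n : ℝ) * N := by
        field_simp at h3
        linarith
      have h5 : t = n * N := by exact_mod_cast h4
      exact ⟨n, by linarith⟩
    simp only [key]
    rw [geom_sum_eq hr]
    have hpow : E ((t : ℝ) / N) ^ N = 1 := by
      rw [← E_nat_mul]
      apply E_eq_one _ t
      field_simp
    rw [hpow, sub_self, zero_div]

noncomputable def Dk (n : ℕ) (x : ℝ) : ℂ := ∑ m ∈ Finset.range n, E (x * m)

lemma normSq_Dk (n : ℕ) (x : ℝ) :
    ((Complex.normSq (Dk n x) : ℝ) : ℂ)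
      = ∑ m1 ∈ Finset.range n, ∑ m2 ∈ Finset.range n, E (x * m1 - x * m2) := by
  rw [← Complex.mul_conj, Dk, map_sum, Finset.sum_mul_sum]
  refine Finset.sum_congr rfl fun m1 _ => Finset.sum_congr rfl fun m2 _ => ?_
  rw [E_conj, ← E_add, sub_eq_add_neg]

lemma int_zero_of_dvd (N : ℕ) (hN : 0 < N) (t : ℤ) (h : (N : ℤ) ∣ t)
    (h1 : -(N : ℤ) < t) (h2 : t < N) : t = 0 := by
  obtain ⟨k, rfl⟩ := h
  have hN' : (0 : ℤ) < N := by exact_mod_cast hN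
  have hk1 : k < 1 := by
    by_contra hk
    push_neg at hk
    nlinarith
  have hk2 : -1 < k := by
    by_contra hk
    push_neg at hk
    nlinarith
  have : k = 0 := by omega
  simp [this]

lemma key_sum (M N : ℕ) (hN : 0 < N) (f : ℝ) (n m : ℕ)
    (hm : m ≤ n) (hmM : m < M) (hn : n + M ≤ N + 1) :
    ∑ j ∈ Finset.range N,
      (∑ m1 ∈ Finset.range n, ∑ m2 ∈ Finset.range n,
          E ((f - (j : ℝ) / N) * m1 - (f - (j : ℝ) / N) * m2)) * E ((j : ℝ) / N * m)
      = (N : ℂ) * ((n - m : ℕ) : ℂ) * E (f * m) := by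
  -- step 1: rewrite each j-term, pushing the factor inside and splitting E
  have step1 : ∀ j ∈ Finset.range N,
      (∑ m1 ∈ Finset.range n, ∑ m2 ∈ Finset.range n,
          E ((f - (j : ℝ) / N) * m1 - (f - (j : ℝ) / N) * m2)) * E ((j : ℝ) / N * m)
      = ∑ m1 ∈ Finset.range n, ∑ m2 ∈ Finset.range n,
          E (f * m1 - f * m2) * E ((j : ℝ) / N * (((m : ℤ) - m1 + m2 : ℤ) : ℝ)) := by
    intro j _
    rw [Finset.sum_mul]
    refine Finset.sum_congr rfl fun m1 _ => ?_
    rw [Finset.sum_mul]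
    refine Finset.sum_congr rfl fun m2 _ => ?_
    rw [← E_add, ← E_add]
    congr 1
    push_cast
    ring
  rw [Finset.sum_congr rfl step1]
  rw [Finset.sum_comm]
  have step2 : ∀ m1 ∈ Finset.range n,
      ∑ j ∈ Finset.range N, ∑ m2 ∈ Finset.range n,
          E (f * m1 - f * m2) * E ((j : ℝ) / N * (((m : ℤ) - m1 + m2 : ℤ) : ℝ))
      = ∑ m2 ∈ Finset.range n,
          E (f * m1 - f * m2) * (if (N : ℤ) ∣ ((m : ℤ) - m1 + m2) then (N : ℂ) else 0) := by
    intro m1 _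
    rw [Finset.sum_comm]
    refine Finset.sum_congr rfl fun m2 _ => ?_
    rw [← Finset.mul_sum, grid_sum N hN]
  rw [Finset.sum_congr rfl step2]
  -- step 3: resolve divisibility
  have step3 : ∀ m1 ∈ Finset.range n, ∀ m2 ∈ Finset.range n,
      E (f * m1 - f * m2) * (if (N : ℤ) ∣ ((m : ℤ) - m1 + m2) then (N : ℂ) else 0)
      = if m1 = m + m2 then (N : ℂ) * E (f * m) else 0 := by
    intro m1 hm1 m2 hm2
    rw [Finset.mem_range] at hm1 hm2
    by_cases hd : (N : ℤ) ∣ ((m : ℤ) - m1 + m2)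
    · have ht0 : ((m : ℤ) - m1 + m2) = 0 := by
        apply int_zero_of_dvd N hN _ hd
        · omega
        · omega
      have hme : m1 = m + m2 := by omega
      rw [if_pos hd, if_pos hme]
      have : f * m1 - f * m2 = f * m := by
        rw [hme]; push_cast; ring
      rw [this]; ring
    · have hme : ¬ (m1 = m + m2) := by
        intro hc
        apply hd
        rw [hc]
        push_cast
        simp
      rw [if_neg hd, if_neg hme, mul_zero]
  rw [Finset.sum_congr rfl (fun m1 h1 => Finset.sum_congr rfl (fun m2 h2 => step3 m1 h1 m2 h2))]
  -- step 4: count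
  rw [Finset.sum_comm]
  have step4 : ∀ m2 ∈ Finset.range n,
      (∑ m1 ∈ Finset.range n, if m1 = m + m2 then (N : ℂ) * E (f * m) else 0)
      = if m2 ∈ Finset.range (n - m) then (N : ℂ) * E (f * m) else 0 := by
    intro m2 _
    rw [Finset.sum_ite_eq' (Finset.range n) (m + m2)]
    have hiff : (m + m2 ∈ Finset.range n) ↔ (m2 ∈ Finset.range (n - m)) := by
      simp only [Finset.mem_range]
      omega
    simp only [hiff]
  rw [Finset.sum_congr rfl step4, Finset.sum_ite_mem]
  have : Finset.range n ∩ Finset.range (n - m) = Finset.range (n - m) := by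
    apply Finset.inter_eq_right.mpr
    exact Finset.range_subset_range.mpr (Nat.sub_le n m)
  rw [this, Finset.sum_const, Finset.card_range]
  push_cast
  ring

/-- The interpolation coefficients (trapezoidal/de-la-Vallée-Poussin kernel). -/
noncomputable def coeff (M N : ℕ) (f : ℝ) (j : ℕ) : ℝ :=
  (Complex.normSq (Dk (N - M) (f - (j : ℝ) / N)) - Complex.normSq (Dk (M - 1) (f - (j : ℝ) / N)))
    / ((N : ℝ) * (((N - M : ℕ) : ℝ) - ((M - 1 : ℕ) : ℝ)))

lemma exactness (M N : ℕ) (hM : 1 ≤ M) (h2 : 2 * M ≤ N) (f : ℝ) (m : ℕ) (hmM : m < M) :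
    ∑ j ∈ Finset.range N, ((coeff M N f j : ℝ) : ℂ) * E ((j : ℝ) / N * m) = E (f * m) := by
  have hN : 0 < N := by omega
  set b := N - M with hb
  set a := M - 1 with ha
  have hsumb := key_sum M N hN f b m (by omega) hmM (by omega)
  have hsuma := key_sum M N hN f a m (by omega) hmM (by omega)
  have hterm : ∀ j ∈ Finset.range N,
      ((coeff M N f j : ℝ) : ℂ) * E ((j : ℝ) / N * m)
      = (((N : ℝ) * (((b : ℕ) : ℝ) - ((a : ℕ) : ℝ)) : ℝ) : ℂ)⁻¹ *
        ((∑ m1 ∈ Finset.range b, ∑ m2 ∈ Finset.range b,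
            E ((f - (j : ℝ) / N) * m1 - (f - (j : ℝ) / N) * m2)) * E ((j : ℝ) / N * m)
         - (∑ m1 ∈ Finset.range a, ∑ m2 ∈ Finset.range a,
            E ((f - (j : ℝ) / N) * m1 - (f - (j : ℝ) / N) * m2)) * E ((j : ℝ) / N * m)) := by
    intro j _
    rw [coeff, ← normSq_Dk, ← normSq_Dk]
    push_cast
    ring
  rw [Finset.sum_congr rfl hterm, ← Finset.mul_sum, Finset.sum_sub_distrib, hsumb, hsuma]
  have hab : a < b := by omega
  have hma : m ≤ a := by omega
  have hmb : m ≤ b := by omega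
  have hcast1 : ((b - m : ℕ) : ℂ) = (b : ℂ) - (m : ℂ) := by
    push_cast [Nat.cast_sub hmb]; ring
  have hcast2 : ((a - m : ℕ) : ℂ) = (a : ℂ) - (m : ℂ) := by
    push_cast [Nat.cast_sub hma]; ring
  rw [hcast1, hcast2]
  have hNne : (N : ℂ) ≠ 0 := Nat.cast_ne_zero.mpr hN.ne'
  have habne : (b : ℂ) - (a : ℂ) ≠ 0 := by
    have : ((a : ℕ) : ℂ) ≠ ((b : ℕ) : ℂ) := by
      exact_mod_cast Nat.cast_injective.ne hab.ne
    intro hc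
    apply this
    linear_combination -hc
  push_cast
  field_simp
  ring

lemma parseval (M N n : ℕ) (hM : 1 ≤ M) (hN : 0 < N) (hn : n + M ≤ N + 1) (f : ℝ) :
    ∑ j ∈ Finset.range N, Complex.normSq (Dk n (f - (j : ℝ) / N)) = (N : ℝ) * n := by
  have h := key_sum M N hN f n 0 (Nat.zero_le n) (by omega) hn
  simp only [Nat.cast_zero, mul_zero, E_zero, mul_one, Nat.sub_zero] at h
  apply Complex.ofReal_injective
  push_cast [normSq_Dk]
  exact_mod_cast h

lemma l1_bound (M N : ℕ) (hM : 1 ≤ M) (h2 : 2 * M ≤ N) (f : ℝ) :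
    ∑ j ∈ Finset.range N, |coeff M N f j|
      ≤ (((M - 1 : ℕ) : ℝ) + ((N - M : ℕ) : ℝ)) / (((N - M : ℕ) : ℝ) - ((M - 1 : ℕ) : ℝ)) := by
  have hN : 0 < N := by omega
  set b := N - M with hb
  set a := M - 1 with ha
  have hd : (0 : ℝ) < (N : ℝ) * (((b : ℕ) : ℝ) - ((a : ℕ) : ℝ)) := by
    apply mul_pos
    · exact_mod_cast hN
    · have : (a : ℕ) < b := by omega
      have := (Nat.cast_lt (α := ℝ)).mpr this
      linarith
  have hstep : ∀ j ∈ Finset.range N, |coeff M N f j|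
      ≤ (Complex.normSq (Dk b (f - (j : ℝ) / N)) + Complex.normSq (Dk a (f - (j : ℝ) / N)))
          / ((N : ℝ) * (((b : ℕ) : ℝ) - ((a : ℕ) : ℝ))) := by
    intro j _
    rw [coeff, abs_div, abs_of_pos hd]
    apply (div_le_div_iff_of_pos_right hd).mpr
    have hp := Complex.normSq_nonneg (Dk b (f - (j : ℝ) / N))
    have hq := Complex.normSq_nonneg (Dk a (f - (j : ℝ) / N))
    rw [abs_le]
    constructor <;> linarith
  calc ∑ j ∈ Finset.range N, |coeff M N f j|
      ≤ ∑ j ∈ Finset.range N,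
          (Complex.normSq (Dk b (f - (j : ℝ) / N)) + Complex.normSq (Dk a (f - (j : ℝ) / N)))
            / ((N : ℝ) * (((b : ℕ) : ℝ) - ((a : ℕ) : ℝ))) := Finset.sum_le_sum hstep
    _ = ((∑ j ∈ Finset.range N, Complex.normSq (Dk b (f - (j : ℝ) / N)))
          + ∑ j ∈ Finset.range N, Complex.normSq (Dk a (f - (j : ℝ) / N)))
            / ((N : ℝ) * (((b : ℕ) : ℝ) - ((a : ℕ) : ℝ))) := by
        rw [← Finset.sum_div, Finset.sum_add_distrib]
    _ = ((N : ℝ) * (b : ℕ) + (N : ℝ) * (a : ℕ))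
            / ((N : ℝ) * (((b : ℕ) : ℝ) - ((a : ℕ) : ℝ))) := by
        rw [parseval M N b hM hN (by omega) f, parseval M N a hM hN (by omega) f]
    _ = (((a : ℕ) : ℝ) + ((b : ℕ) : ℝ)) / (((b : ℕ) : ℝ) - ((a : ℕ) : ℝ)) := by
        have hba : (0:ℝ) < ((b : ℕ) : ℝ) - ((a : ℕ) : ℝ) := by
          have h' : (a : ℕ) < b := by omega
          have := (Nat.cast_lt (α := ℝ)).mpr h'
          linarith
        rw [div_eq_div_iff hd.ne' hba.ne']
        ring

lemma numeric (M K N : ℕ) (hM : 1 ≤ M) (hK : 1 ≤ K) (hN : 2 * Real.pi * M * K < N) :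
    (((M - 1 : ℕ) : ℝ) + ((N - M : ℕ) : ℝ)) / (((N - M : ℕ) : ℝ) - ((M - 1 : ℕ) : ℝ))
      ≤ ((1 - 2 * Real.pi * M * K / N) ^ ((1 : ℝ) / 2))⁻¹ := by
  have hπ : (3 : ℝ) < Real.pi := Real.pi_gt_three
  have hM1 : (1 : ℝ) ≤ (M : ℝ) := by exact_mod_cast hM
  have hK1 : (1 : ℝ) ≤ (K : ℝ) := by exact_mod_cast hK
  have hπK : Real.pi ≤ Real.pi * K := by nlinarith
  have hQM : 6 * (M : ℝ) ≤ 2 * Real.pi * M * K := by nlinarith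
  have h2MN : (2 * (M : ℝ)) < N := by nlinarith
  have h2MNnat : 2 * M < N := by exact_mod_cast h2MN
  have hN0 : (0 : ℝ) < N := by nlinarith
  have hcast1 : ((N - M : ℕ) : ℝ) = (N : ℝ) - M := by
    rw [Nat.cast_sub (by omega)]
  have hcast2 : ((M - 1 : ℕ) : ℝ) = (M : ℝ) - 1 := by
    rw [Nat.cast_sub (by omega)]
    simp
  rw [hcast1, hcast2]
  set ε : ℝ := 2 * Real.pi * M * K / N with hε
  have hε0 : 0 < ε := by positivity
  have hε1 : ε < 1 := by
    rw [hε, div_lt_one hN0]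
    exact hN
  have hsqrt : (1 - ε) ^ ((1 : ℝ) / 2) = Real.sqrt (1 - ε) := by
    rw [Real.sqrt_eq_rpow]
  have hsle : Real.sqrt (1 - ε) ≤ 1 - ε / 2 := by
    have h1 : Real.sqrt (1 - ε) ≤ Real.sqrt ((1 - ε / 2) ^ 2) := by
      apply Real.sqrt_le_sqrt
      nlinarith
    rwa [Real.sqrt_sq (by linarith)] at h1
  have hs0 : 0 < Real.sqrt (1 - ε) := Real.sqrt_pos.mpr (by linarith)
  have hinv : (1 - ε / 2)⁻¹ ≤ (Real.sqrt (1 - ε))⁻¹ :=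
    inv_anti₀ hs0 hsle
  rw [hsqrt]
  refine le_trans ?_ hinv
  have hden1 : (0 : ℝ) < (N : ℝ) - M - ((M : ℝ) - 1) := by linarith
  have hden2 : (0 : ℝ) < 1 - ε / 2 := by linarith
  rw [inv_eq_one_div, div_le_div_iff₀ hden1 hden2]
  -- (M - 1 + (N - M)) * (1 - ε/2) ≤ (N - M - (M-1)) * 1
  have hQ : Real.pi * M * K ≤ Real.pi * M * K := le_refl _
  have hexp : ((M : ℝ) - 1 + ((N : ℝ) - M)) * (1 - ε / 2)
      = (((N : ℝ) - 1) * ((N : ℝ) - Real.pi * M * K)) / N := by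
    rw [hε]
    field_simp
    ring
  rw [hexp, div_le_iff₀ hN0]
  have hP3 : 3 * (M : ℝ) ≤ Real.pi * M * K := by linarith
  have hNP : 2 * (Real.pi * M * K) < N := by nlinarith
  have hN6 : (6 : ℝ) ≤ N := by linarith
  nlinarith [mul_pos hN0 hN0, mul_le_mul_of_nonneg_right hP3 (le_of_lt hN0),
    mul_le_mul_of_nonneg_right hN6 (mul_pos (by nlinarith : (0:ℝ) < Real.pi * M * K) hN0).le]

variable {V : Type*} [AddCommGroup V] [Module ℝ V]

lemma gauge_pair {s t : Set V} {c : ℝ} (hc : 0 < c) (hst : s ⊆ t) (hts : t ⊆ c • s) (x : V) :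
    gauge s x ≤ c * gauge t x ∧ gauge t x ≤ gauge s x := by
  have hgs : gauge s x = sInf {r : ℝ | 0 < r ∧ x ∈ r • s} := rfl
  have hgt : gauge t x = sInf {r : ℝ | 0 < r ∧ x ∈ r • t} := rfl
  set P := {r : ℝ | 0 < r ∧ x ∈ r • s} with hP
  set Q := {r : ℝ | 0 < r ∧ x ∈ r • t} with hQ
  have hPQ : P ⊆ Q := fun r hr => ⟨hr.1, Set.smul_set_mono hst hr.2⟩
  have hQP : ∀ r ∈ Q, c * r ∈ P := by
    intro r hr
    refine ⟨mul_pos hc hr.1, ?_⟩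
    have h1 : x ∈ r • (c • s) := Set.smul_set_mono hts hr.2
    obtain ⟨y, hy, rfl⟩ := h1
    obtain ⟨z, hz, rfl⟩ := hy
    exact ⟨z, hz, by simp [smul_smul, mul_comm]⟩
  have hbddP : BddBelow P := ⟨0, fun r hr => hr.1.le⟩
  have hbddQ : BddBelow Q := ⟨0, fun r hr => hr.1.le⟩
  by_cases hQe : Q.Nonempty
  · have hPe : P.Nonempty := ⟨c * hQe.choose, hQP _ hQe.choose_spec⟩
    rw [hgs, hgt]
    constructor
    · have h2 : ∀ r ∈ Q, sInf P / c ≤ r := by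
        intro r hr
        rw [div_le_iff₀ hc]
        have := csInf_le hbddP (hQP r hr)
        linarith [this]
      have h3 : sInf P / c ≤ sInf Q := le_csInf hQe h2
      rw [div_le_iff₀ hc] at h3
      linarith
    · exact csInf_le_csInf hbddQ hPe hPQ
  · have hQ0 : Q = ∅ := Set.not_nonempty_iff_eq_empty.mp hQe
    have hP0 : P = ∅ := Set.eq_empty_of_subset_empty (hQ0 ▸ hPQ)
    rw [hgs, hgt, hP0, hQ0, Real.sInf_empty]
    constructor <;> simp

lemma steer_eq (M : ℕ) (g : ℝ) (m : Fin M) : steer M g m = E (g * (m : ℕ)) := by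
  rw [steer, E]
  congr 1
  push_cast
  ring

lemma zero_mem_hull (M K N : ℕ) (hK : 0 < K) (hN : 0 < N) :
    (0 : Matrix (Fin M) (Fin K) ℂ) ∈ convexHull ℝ (gridAtomicSet M K N) := by
  set u0 : Fin K → ℂ := fun k => if k = (⟨0, hK⟩ : Fin K) then 1 else 0 with hu0
  have hnorm : ∑ k, ‖u0 k‖ ^ 2 = 1 := by
    rw [hu0]
    rw [Fintype.sum_eq_single (⟨0, hK⟩ : Fin K)]
    · simp
    · intro k hk
      simp [hk]
  set B0 : Matrix (Fin M) (Fin K) ℂ :=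
    ((Real.sqrt M : ℂ))⁻¹ • Matrix.vecMulVec (steer M (((⟨0, hN⟩ : Fin N) : ℝ) / N)) (star u0) with hB0
  have hB : B0 ∈ gridAtomicSet M K N := ⟨⟨0, hN⟩, u0, hnorm, rfl⟩
  have hB' : -B0 ∈ gridAtomicSet M K N := by
    refine ⟨⟨0, hN⟩, -u0, ?_, ?_⟩
    · simpa using hnorm
    · rw [hB0, star_neg]
      rw [show Matrix.vecMulVec (steer M (((⟨0, hN⟩ : Fin N) : ℝ) / N)) (-star u0)
          = -Matrix.vecMulVec (steer M (((⟨0, hN⟩ : Fin N) : ℝ) / N)) (star u0) by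
        ext i k
        simp [Matrix.vecMulVec_apply]]
      rw [smul_neg]
  have h0 : (0 : Matrix (Fin M) (Fin K) ℂ) = (1/2 : ℝ) • B0 + (1/2 : ℝ) • (-B0) := by
    rw [smul_neg, add_neg_cancel]
  rw [h0]
  exact (convex_convexHull ℝ (gridAtomicSet M K N))
    (subset_convexHull ℝ _ hB) (subset_convexHull ℝ _ hB')
    (by norm_num) (by norm_num) (by norm_num)

lemma atomic_subset (M K N : ℕ) (hM : 1 ≤ M) (hK : 1 ≤ K) (h2 : 2 * M ≤ N) (C : ℝ) (hC0 : 0 < C)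
    (hC : ∀ f : ℝ, ∑ j ∈ Finset.range N, |coeff M N f j| ≤ C) :
    atomicSet M K ⊆ C • convexHull ℝ (gridAtomicSet M K N) := by
  have hN : 0 < N := by omega
  rintro X ⟨f, _, u, hu, rfl⟩
  -- sign flips
  set sg : ℕ → ℝ := fun j => if coeff M N f j < 0 then -1 else 1 with hsg
  have hsg1 : ∀ j, ‖sg j‖ = 1 := by
    intro j
    rw [hsg]
    by_cases h : coeff M N f j < 0 <;> simp [h]
  have hsgabs : ∀ j, |coeff M N f j| * sg j = coeff M N f j := by
    intro j
    rw [hsg]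
    by_cases h : coeff M N f j < 0
    · simp only [if_pos h, abs_of_neg h]; ring
    · simp only [if_neg h, _root_.abs_of_nonneg (not_lt.mp h)]; ring
  set B : ℕ → Matrix (Fin M) (Fin K) ℂ := fun j =>
    ((Real.sqrt M : ℂ))⁻¹ • Matrix.vecMulVec (steer M ((j : ℝ) / N)) (star (sg j • u)) with hB
  set B0 : ℕ → Matrix (Fin M) (Fin K) ℂ := fun j =>
    ((Real.sqrt M : ℂ))⁻¹ • Matrix.vecMulVec (steer M ((j : ℝ) / N)) (star u) with hB0
  have hBmem : ∀ j < N, B j ∈ gridAtomicSet M K N := by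
    intro j hj
    refine ⟨⟨j, hj⟩, sg j • u, ?_, rfl⟩
    refine (Finset.sum_congr rfl fun k _ => ?_).trans hu
    rw [Pi.smul_apply, norm_smul, hsg1, one_mul]
  have hBsmul : ∀ j, B j = sg j • B0 j := by
    intro j
    rw [hB, hB0]
    simp only
    rw [star_smul, star_trivial]
    rw [show Matrix.vecMulVec (steer M ((j : ℝ) / N)) (sg j • star u)
        = sg j • Matrix.vecMulVec (steer M ((j : ℝ) / N)) (star u) by
      ext i k
      simp [Matrix.vecMulVec_apply, Complex.real_smul]
      ring]
    rw [smul_comm]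
  -- the exact decomposition
  have hdecomp : ∑ j ∈ Finset.range N, coeff M N f j • B0 j
      = ((Real.sqrt M : ℂ))⁻¹ • Matrix.vecMulVec (steer M f) (star u) := by
    ext i k
    rw [Matrix.sum_apply]
    have hterm : ∀ j ∈ Finset.range N, (coeff M N f j • B0 j) i k
        = ((Real.sqrt M : ℂ))⁻¹ * star u k * (((coeff M N f j : ℝ) : ℂ) * E ((j : ℝ) / N * (i : ℕ))) := by
      intro j _
      rw [hB0]
      simp only [Pi.smul_apply, Matrix.smul_apply, Matrix.vecMulVec_apply, Complex.real_smul,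
        steer_eq, Pi.star_apply, smul_eq_mul]
      ring
    rw [Finset.sum_congr rfl hterm, ← Finset.mul_sum,
      exactness M N hM h2 f (i : ℕ) i.isLt]
    simp only [Matrix.smul_apply, Matrix.vecMulVec_apply, steer_eq, Pi.star_apply,
      smul_eq_mul]
    ring
  set W : ℕ → ℝ := fun j => if j < N then |coeff M N f j| / C
      else 1 - (∑ i ∈ Finset.range N, |coeff M N f i|) / C with hW
  set Pt : ℕ → Matrix (Fin M) (Fin K) ℂ := fun j => if j < N then B j else 0 with hPt
  have hWN : ∀ j ∈ Finset.range N, W j = |coeff M N f j| / C := by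
    intro j hj
    rw [hW]
    simp only [if_pos (Finset.mem_range.mp hj)]
  have hY : (∑ j ∈ Finset.range (N + 1), W j • Pt j) ∈ convexHull ℝ (gridAtomicSet M K N) := by
    apply Convex.sum_mem (convex_convexHull ℝ _)
    · intro j hj
      rw [hW]
      by_cases h : j < N
      · simp only [if_pos h]
        positivity
      · simp only [if_neg h, sub_nonneg]
        rw [div_le_one hC0]
        exact hC f
    · rw [Finset.sum_range_succ, Finset.sum_congr rfl hWN, hW]
      simp only [if_neg (lt_irrefl N)]
      rw [← Finset.sum_div]
      ring
    · intro j _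
      rw [hPt]
      by_cases h : j < N
      · simp only [if_pos h]
        exact subset_convexHull ℝ _ (hBmem j h)
      · simp only [if_neg h]
        exact zero_mem_hull M K N (by omega) hN
  rw [Set.mem_smul_set]
  refine ⟨∑ j ∈ Finset.range (N + 1), W j • Pt j, hY, ?_⟩
  rw [Finset.smul_sum, Finset.sum_range_succ]
  have hlast : C • (W N • Pt N) = 0 := by
    rw [hPt]
    simp [lt_irrefl N]
  rw [hlast, add_zero]
  have hterm2 : ∀ j ∈ Finset.range N, C • (W j • Pt j) = coeff M N f j • B0 j := by
    intro j hj
    have hjN := Finset.mem_range.mp hj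
    rw [hWN j hj, hPt]
    simp only [if_pos hjN]
    rw [smul_smul, mul_comm C, div_mul_cancel₀ _ hC0.ne', hBsmul j, smul_smul, hsgabs]
  rw [Finset.sum_congr rfl hterm2, hdecomp]

end Stmt14

end Stmt14Aux

open Pointwise Stmt14

/-- for `N > 2πMK`, the gridded atomic norm sandwiches the continuum atomic
norm: `(1 − 2πMK/N)^{1/2}·‖H‖_{𝒜_N} ≤ ‖H‖_𝒜 ≤ ‖H‖_{𝒜_N}`. -/
theorem stmt_14 (M K N : ℕ) (hM : 1 ≤ M) (hK : 1 ≤ K) (hN : 2 * Real.pi * M * K < N)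
    (H : Matrix (Fin M) (Fin K) ℂ) :
    (1 - 2 * Real.pi * M * K / N) ^ ((1 : ℝ) / 2) * gridAtomicNorm M K N H
        ≤ atomicNorm M K H ∧
      atomicNorm M K H ≤ gridAtomicNorm M K N H := by
  have hπ : (3 : ℝ) < Real.pi := Real.pi_gt_three
  have hM1 : (1 : ℝ) ≤ (M : ℝ) := by exact_mod_cast hM
  have hK1 : (1 : ℝ) ≤ (K : ℝ) := by exact_mod_cast hK
  have hπK : Real.pi ≤ Real.pi * K := by nlinarith
  have hQM : 6 * (M : ℝ) ≤ 2 * Real.pi * M * K := by nlinarith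
  have h2MN : (2 * (M : ℝ)) < N := by nlinarith
  have h2 : 2 * M ≤ N := by
    have : 2 * M < N := by exact_mod_cast h2MN
    omega
  have hN0 : (0 : ℝ) < N := by nlinarith
  set ε : ℝ := 2 * Real.pi * M * K / N with hε
  have hε1 : ε < 1 := by
    rw [hε, div_lt_one hN0]
    exact hN
  have hε0 : 0 < ε := by positivity
  have hk0 : 0 < (1 - ε) ^ ((1 : ℝ) / 2) := Real.rpow_pos_of_pos (by linarith) _
  set c : ℝ := ((1 - ε) ^ ((1 : ℝ) / 2))⁻¹ with hc
  have hc0 : 0 < c := by positivity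
  have hCbound : ∀ f : ℝ, ∑ j ∈ Finset.range N, |coeff M N f j| ≤ c := by
    intro f
    exact (l1_bound M N hM h2 f).trans (numeric M K N hM hK hN)
  have hGS : convexHull ℝ (gridAtomicSet M K N) ⊆ convexHull ℝ (atomicSet M K) := by
    apply convexHull_mono
    rintro X ⟨j, u, hu, rfl⟩
    refine ⟨(j : ℝ) / N, ⟨by positivity, ?_⟩, u, hu, rfl⟩
    rw [div_lt_one hN0]
    exact_mod_cast j.isLt
  have hSG : convexHull ℝ (atomicSet M K) ⊆ c • convexHull ℝ (gridAtomicSet M K N) := by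
    apply convexHull_min (atomic_subset M K N hM hK h2 c hc0 hCbound)
    exact (convex_convexHull ℝ (gridAtomicSet M K N)).smul c
  obtain ⟨hlow, hup⟩ := gauge_pair hc0 hGS hSG H
  constructor
  · have h3 : (1 - ε) ^ ((1 : ℝ) / 2) * gauge (convexHull ℝ (gridAtomicSet M K N)) H
        ≤ (1 - ε) ^ ((1 : ℝ) / 2) * (c * gauge (convexHull ℝ (atomicSet M K)) H) :=
      mul_le_mul_of_nonneg_left hlow hk0.le
    rw [← mul_assoc, hc, mul_inv_cancel₀ hk0.ne', one_mul] at h3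
    exact h3
  · exact hup
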